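/- Let f(x) = Σ_i l_i x_i + Σ_{i<j} q_{ij} x_i x_j (mod 2) be a quadratic Boolean function on Z_2^n, and suppose vectors p_1, …, p_n ∈ Z_2^N satisfy p_i · p_j = q_{ij} (mod 2) for all i < j and W(p_i) = 0 (mod 2) for all i. Then for every x ∈ Z_2^n, Σ_{i<j} (p_i · p_j) x_i x_j = Σ_{i<j} q_{ij} x_i x_j (mod 2) and Π_{i} Q(p_i x_i) = (−1)^{Σ_{i<j} q_{ij} x_i x_j} Q(⊕_i p_i x_i), where Q(u) = i^{W(u)} ⊗_k Y^{u_k}. -/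

import Mathlib

/-- The Pauli Y matrix `[[0, −i],[i, 0]]`. -/
noncomputable def pauliY : Matrix (Fin 2) (Fin 2) ℂ :=
  !![0, -Complex.I; Complex.I, 0]

/-- `Q(u) = i^{W(u)} ⊗_{k=1}^N Y^{u_k}` acting on `(ℂ^2)^{⊗N}`, realised as a
matrix indexed by `Fin N → Fin 2`; `W(u)` is the Hamming weight of `u`. -/
noncomputable def Qop (N : ℕ) (u : Fin N → ZMod 2) :
    Matrix (Fin N → Fin 2) (Fin N → Fin 2) ℂ :=
  (Complex.I ^ (Finset.univ.filter (fun k => u k ≠ 0)).card) •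
    Matrix.of (fun x y => ∏ k, (pauliY ^ (u k).val) (x k) (y k))

lemma pauliY_sq : pauliY * pauliY = 1 := by
  ext i j
  fin_cases i <;> fin_cases j <;>
    simp [pauliY, Matrix.mul_apply, Fin.sum_univ_two, Matrix.one_apply, Complex.I_mul_I]

/-- Single-site operator `i^{a} Y^{a}`. -/
noncomputable def Ym (a : ZMod 2) : Matrix (Fin 2) (Fin 2) ℂ :=
  (Complex.I ^ a.val) • pauliY ^ a.val

lemma Ym_mul (a b : ZMod 2) : Ym a * Ym b = ((-1:ℂ)^((a*b).val)) • Ym (a+b) := by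
  rcases (show a = 0 ∨ a = 1 by revert a; decide) with rfl | rfl <;>
    rcases (show b = 0 ∨ b = 1 by revert b; decide) with rfl | rfl <;>
    simp [Ym, pauliY_sq, pow_succ, smul_smul, Complex.I_mul_I, ZMod.val_one,
      show (1+1:ZMod 2)=0 from rfl]

lemma Ym_zero : Ym 0 = 1 := by simp [Ym]

lemma zmod2_val_eq_ite (a : ZMod 2) : a.val = if a ≠ 0 then 1 else 0 := by
  revert a; decide

lemma Qop_eq (N : ℕ) (u : Fin N → ZMod 2) :
    Qop N u = Matrix.of (fun x y => ∏ k, Ym (u k) (x k) (y k)) := by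
  ext x y
  have hcard : (Finset.univ.filter (fun k => u k ≠ 0)).card = ∑ k, (u k).val := by
    rw [Finset.card_filter]
    exact Finset.sum_congr rfl fun k _ => (zmod2_val_eq_ite (u k)).symm
  simp only [Qop, Matrix.smul_apply, Matrix.of_apply, smul_eq_mul, Ym, hcard]
  rw [← Finset.prod_pow_eq_pow_sum, ← Finset.prod_mul_distrib]

lemma one_apply_prod (N : ℕ) (x y : Fin N → Fin 2) :
    ∏ k, (1 : Matrix (Fin 2) (Fin 2) ℂ) (x k) (y k)
      = (1 : Matrix (Fin N → Fin 2) (Fin N → Fin 2) ℂ) x y := by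
  by_cases h : x = y
  · simp [h, Matrix.one_apply]
  · obtain ⟨k, hk⟩ := Function.ne_iff.mp h
    rw [Matrix.one_apply_ne h]
    exact Finset.prod_eq_zero (Finset.mem_univ k) (Matrix.one_apply_ne hk)

lemma neg_one_pow_val_add (a b : ZMod 2) :
    ((-1:ℂ)^((a+b).val)) = (-1:ℂ)^a.val * (-1:ℂ)^b.val := by
  rcases (show a = 0 ∨ a = 1 by revert a; decide) with rfl | rfl <;>
    rcases (show b = 0 ∨ b = 1 by revert b; decide) with rfl | rfl <;>
    norm_num [ZMod.val_one, show (1+1:ZMod 2)=0 from rfl, show ZMod.val (2:ZMod 2) = 0 from rfl]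

lemma neg_one_pow_val_sum {ι : Type*} (s : Finset ι) (f : ι → ZMod 2) :
    ((-1:ℂ)^((∑ i ∈ s, f i).val)) = ∏ i ∈ s, (-1:ℂ)^((f i).val) := by
  induction s using Finset.cons_induction with
  | empty => simp
  | cons i s hi ih => rw [Finset.sum_cons, Finset.prod_cons, neg_one_pow_val_add, ih]

lemma Qop_zero (N : ℕ) : Qop N 0 = 1 := by
  rw [Qop_eq]
  ext x y
  simp only [Matrix.of_apply, Pi.zero_apply, Ym_zero]
  exact one_apply_prod N x y

/-- The pairwise multiplication law `Q(u) Q(v) = (-1)^{u·v} Q(u ⊕ v)`. -/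
lemma Qop_mul (N : ℕ) (u v : Fin N → ZMod 2) :
    Qop N u * Qop N v = ((-1:ℂ)^((∑ k, u k * v k).val)) • Qop N (u + v) := by
  rw [Qop_eq, Qop_eq, Qop_eq]
  ext x y
  simp only [Matrix.mul_apply, Matrix.of_apply, Matrix.smul_apply, smul_eq_mul]
  calc ∑ z : Fin N → Fin 2, (∏ k, Ym (u k) (x k) (z k)) * ∏ k, Ym (v k) (z k) (y k)
      = ∑ z : Fin N → Fin 2, ∏ k, (Ym (u k) (x k) (z k) * Ym (v k) (z k) (y k)) := by
        simp [Finset.prod_mul_distrib]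
    _ = ∏ k, ∑ m : Fin 2, Ym (u k) (x k) m * Ym (v k) m (y k) := by
        rw [Finset.prod_univ_sum]
        simp
    _ = ∏ k, (Ym (u k) * Ym (v k)) (x k) (y k) := by
        simp [Matrix.mul_apply]
    _ = ∏ k, (((-1:ℂ)^((u k * v k).val)) * Ym ((u + v) k) (x k) (y k)) := by
        refine Finset.prod_congr rfl fun k _ => ?_
        rw [Ym_mul]; simp
    _ = ((-1:ℂ)^((∑ k, u k * v k).val)) * ∏ k, Ym ((u + v) k) (x k) (y k) := by
        rw [Finset.prod_mul_distrib, neg_one_pow_val_sum]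

/-- Iterated form of the multiplication law. -/
lemma Qop_list (N n : ℕ) (u : Fin n → Fin N → ZMod 2) :
    (List.ofFn (fun i => Qop N (u i))).prod =
      ((-1:ℂ)^((∑ i, ∑ j, if i < j then ∑ k, u i k * u j k else (0:ZMod 2)).val)) •
        Qop N (∑ i, u i) := by
  induction n with
  | zero => simp [Qop_zero]
  | succ n ih =>
    have hsum : ∑ i : Fin (n+1), u i = u 0 + ∑ i : Fin n, u i.succ :=
      Fin.sum_univ_succ u
    have hS : (∑ i : Fin (n+1), ∑ j, if i < j then ∑ k, u i k * u j k else (0:ZMod 2))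
        = (∑ k, u 0 k * (∑ i : Fin n, u i.succ) k)
          + ∑ i : Fin n, ∑ j, if i < j then ∑ k, u i.succ k * u j.succ k else 0 := by
      rw [Fin.sum_univ_succ]
      congr 1
      · rw [Fin.sum_univ_succ]
        simp only [lt_self_iff_false, if_false, zero_add, Fin.succ_pos, if_true]
        rw [Finset.sum_comm]
        refine Finset.sum_congr rfl fun k _ => ?_
        rw [Finset.sum_apply, Finset.mul_sum]
      · refine Finset.sum_congr rfl fun i _ => ?_
        rw [Fin.sum_univ_succ]
        simp [Fin.succ_lt_succ_iff, (Fin.succ_pos i).not_gt]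
    rw [List.ofFn_succ, List.prod_cons, ih (fun i => u i.succ), Matrix.mul_smul,
      Qop_mul, hS, hsum, neg_one_pow_val_add, smul_smul]
    ring_nf

/-- If `p_i · p_j = q_{ij} (mod 2)` for `i < j` and each `p_i` has even Hamming
weight, then for every `x ∈ Z_2^n` the quadratic forms agree,
`Σ_{i<j} (p_i·p_j) x_i x_j = Σ_{i<j} q_{ij} x_i x_j (mod 2)`, and
`Π_i Q(p_i x_i) = (−1)^{Σ_{i<j} q_{ij} x_i x_j} Q(⊕_i p_i x_i)`. -/
theorem Qop_product_quadratic_phase (n N : ℕ)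
    (q : Fin n → Fin n → ZMod 2) (p : Fin n → (Fin N → ZMod 2))
    (hq : ∀ i j : Fin n, i < j → ∑ k, p i k * p j k = q i j)
    (hw : ∀ i : Fin n, Even (Finset.univ.filter (fun k => p i k ≠ 0)).card)
    (x : Fin n → ZMod 2) :
    (∑ ij ∈ Finset.univ.filter (fun ij : Fin n × Fin n => ij.1 < ij.2),
        (∑ k, p ij.1 k * p ij.2 k) * x ij.1 * x ij.2 =
      ∑ ij ∈ Finset.univ.filter (fun ij : Fin n × Fin n => ij.1 < ij.2),
        q ij.1 ij.2 * x ij.1 * x ij.2) ∧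
    (List.ofFn (fun i : Fin n => Qop N (fun k => x i * p i k))).prod =
      ((-1 : ℂ) ^ (∑ ij ∈ Finset.univ.filter (fun ij : Fin n × Fin n => ij.1 < ij.2),
          q ij.1 ij.2 * x ij.1 * x ij.2).val) •
        Qop N (∑ i, fun k => x i * p i k) := by
  constructor
  · refine Finset.sum_congr rfl fun ij hij => ?_
    rw [hq ij.1 ij.2 (Finset.mem_filter.mp hij).2]
  · have key := Qop_list N n (fun i k => x i * p i k)
    have hS : (∑ i, ∑ j, if i < j then ∑ k, (x i * p i k) * (x j * p j k) else (0:ZMod 2))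
        = ∑ ij ∈ Finset.univ.filter (fun ij : Fin n × Fin n => ij.1 < ij.2),
            q ij.1 ij.2 * x ij.1 * x ij.2 := by
      rw [Finset.sum_filter, Fintype.sum_prod_type]
      refine Finset.sum_congr rfl fun i _ => Finset.sum_congr rfl fun j _ => ?_
      split_ifs with h
      · rw [← hq i j h, Finset.sum_mul, Finset.sum_mul]
        exact Finset.sum_congr rfl fun k _ => by ring
      · rfl
    rw [hS] at key
    exact key
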